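/- arXiv:1512.05325 — 6 statements merged into one kernel-verified Lean document; each statement's English description precedes it below -/
import Mathlib

section
/- Every almost affine code C ⊆ Σⁿ with s = |Σ| induces a matroid on [n] with rank function ρ_C(X) = log_s(|C_X|); that is, ρ_C satisfies 0 ≤ ρ_C(X) ≤ |X|, monotonicity, and semimodularity. -/
/-- Projection of a code `C ⊆ Σ^n` onto the coordinate set `X ⊆ [n]`. -/
def codeProj {Sig : Type*} [DecidableEq Sig] {n : ℕ}
    (C : Finset (Fin n → Sig)) (X : Finset (Fin n)) : Finset (↥X → Sig) :=
  C.image (fun c => fun i : ↥X => c i.1)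

section AAaux

variable {Sig : Type*} [Fintype Sig] [DecidableEq Sig] {n : ℕ}

/-- Restriction map between coordinate sets. -/
def aaRes {X Y : Finset (Fin n)} (_h : X ⊆ Y) (f : ↥Y → Sig) : ↥X → Sig :=
  fun i => f ⟨i.1, _h i.2⟩

lemma codeProj_eq_image (C : Finset (Fin n → Sig)) {X Y : Finset (Fin n)} (h : X ⊆ Y) :
    codeProj C X = (codeProj C Y).image (aaRes h) := by
  unfold codeProj aaRes
  rw [Finset.image_image]
  rfl

lemma aaRes_mem (C : Finset (Fin n → Sig)) {X Y : Finset (Fin n)} (h : X ⊆ Y)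
    {f : ↥Y → Sig} (hf : f ∈ codeProj C Y) : aaRes h f ∈ codeProj C X := by
  rw [codeProj_eq_image C h]
  exact Finset.mem_image_of_mem _ hf

variable {s : ℕ} {C : Finset (Fin n → Sig)} {ρC : Finset (Fin n) → ℕ}

lemma aa_mono (hs2 : 2 ≤ s)
    (haff : ∀ X : Finset (Fin n), s ^ ρC X = (codeProj C X).card)
    {X Y : Finset (Fin n)} (h : X ⊆ Y) : ρC X ≤ ρC Y := by
  have h1 : (codeProj C X).card ≤ (codeProj C Y).card := by
    rw [codeProj_eq_image C h]
    exact Finset.card_image_le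
  rw [← haff, ← haff] at h1
  exact (Nat.pow_le_pow_iff_right (by omega)).mp h1

lemma aa_nonempty (hs2 : 2 ≤ s)
    (haff : ∀ X : Finset (Fin n), s ^ ρC X = (codeProj C X).card)
    (X : Finset (Fin n)) : (codeProj C X).Nonempty := by
  rw [← Finset.card_pos, ← haff]
  exact pow_pos (by omega) _

/-- Single-coordinate extension: all fibers of the projection
`C_{Z∪{i}} → C_Z` have the same size `s ^ (ρ(Z∪{i}) - ρ(Z))`. -/
lemma aa_step (hs : Fintype.card Sig = s) (hs2 : 2 ≤ s)
    (haff : ∀ X : Finset (Fin n), s ^ ρC X = (codeProj C X).card)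
    {Z : Finset (Fin n)} {i : Fin n} (hi : i ∉ Z)
    {a : ↥Z → Sig} (ha : a ∈ codeProj C Z) :
    ((codeProj C (insert i Z)).filter
        (fun f => aaRes (Finset.subset_insert i Z) f = a)).card
      = s ^ (ρC (insert i Z) - ρC Z) := by
  set W := insert i Z with hW
  have hZW : Z ⊆ W := Finset.subset_insert i Z
  set t : (↥Z → Sig) → ℕ :=
    fun b => ((codeProj C W).filter (fun f => aaRes hZW f = b)).card with ht
  -- total count
  have hsum : (codeProj C W).card = ∑ b ∈ codeProj C Z, t b :=
    Finset.card_eq_sum_card_fiberwise (fun f hf => aaRes_mem C hZW hf)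
  -- lower bound: fibers are nonempty
  have hlow : ∀ b ∈ codeProj C Z, 1 ≤ t b := by
    intro b hb
    rw [codeProj_eq_image C hZW] at hb
    obtain ⟨f, hf, hfb⟩ := Finset.mem_image.mp hb
    have : f ∈ (codeProj C W).filter (fun f => aaRes hZW f = b) :=
      Finset.mem_filter.mpr ⟨hf, hfb⟩
    exact Finset.card_pos.mpr ⟨f, this⟩
  -- upper bound: fibers inject into Sig
  have hiW : i ∈ W := Finset.mem_insert_self i Z
  have hupp : ∀ b ∈ codeProj C Z, t b ≤ s := by
    intro b hb
    have hinj : Set.InjOn (fun f : ↥W → Sig => f ⟨i, hiW⟩)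
        ((codeProj C W).filter (fun f => aaRes hZW f = b)) := by
      intro f hf g hg hval
      have hfb : aaRes hZW f = b := (Finset.mem_filter.mp hf).2
      have hgb : aaRes hZW g = b := (Finset.mem_filter.mp hg).2
      funext j
      obtain ⟨j, hj⟩ := j
      rcases Finset.mem_insert.mp hj with rfl | hjZ
      · exact hval
      · exact (congrFun hfb ⟨j, hjZ⟩).trans (congrFun hgb ⟨j, hjZ⟩).symm
    have := Finset.card_le_card_of_injOn (fun f : ↥W → Sig => f ⟨i, hiW⟩)
      (fun _ _ => Finset.mem_univ _) hinj
    simpa [hs] using this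
  -- rank bounds
  have hmono : ρC Z ≤ ρC W := aa_mono hs2 haff hZW
  have hcardZ : (codeProj C Z).card = s ^ ρC Z := (haff Z).symm
  have hle1 : ρC W ≤ ρC Z + 1 := by
    have h1 : (codeProj C W).card ≤ s ^ ρC Z * s := by
      rw [hsum]
      calc ∑ b ∈ codeProj C Z, t b ≤ ∑ _b ∈ codeProj C Z, s :=
            Finset.sum_le_sum hupp
        _ = s ^ ρC Z * s := by rw [Finset.sum_const, hcardZ, smul_eq_mul]
    rw [← haff, ← pow_succ] at h1
    exact (Nat.pow_le_pow_iff_right (by omega)).mp h1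
  have hcases : ρC W = ρC Z ∨ ρC W = ρC Z + 1 := by omega
  rcases hcases with hc | hc
  · -- all fibers have size 1
    have hall1 : t a = 1 := by
      by_contra hne
      have h2 : 2 ≤ t a := by have := hlow a ha; omega
      have : ∑ b ∈ codeProj C Z, (1 : ℕ) < ∑ b ∈ codeProj C Z, t b :=
        Finset.sum_lt_sum hlow ⟨a, ha, by omega⟩
      rw [Finset.sum_const, smul_eq_mul, mul_one, hcardZ, ← hsum, ← haff, hc] at this
      omega
    rw [hc, Nat.sub_self, pow_zero]
    exact hall1
  · -- all fibers have size s
    have halls : t a = s := by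
      by_contra hne
      have h2 : t a < s := lt_of_le_of_ne (hupp a ha) hne
      have : ∑ b ∈ codeProj C Z, t b < ∑ _b ∈ codeProj C Z, s :=
        Finset.sum_lt_sum hupp ⟨a, ha, h2⟩
      rw [Finset.sum_const, smul_eq_mul, hcardZ, ← hsum, ← haff, hc, pow_succ] at this
      omega
    rw [hc, Nat.add_sub_cancel_left, pow_one]
    exact halls

/-- General fiber-size lemma: for `Z ⊆ X`, every fiber of the projection
`C_X → C_Z` has size `s ^ (ρ X - ρ Z)`. -/
lemma aa_fiber (hs : Fintype.card Sig = s) (hs2 : 2 ≤ s)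
    (haff : ∀ X : Finset (Fin n), s ^ ρC X = (codeProj C X).card) :
    ∀ (k : ℕ) (Z X : Finset (Fin n)) (h : Z ⊆ X), (X \ Z).card = k →
      ∀ a ∈ codeProj C Z,
        ((codeProj C X).filter (fun f => aaRes h f = a)).card = s ^ (ρC X - ρC Z) := by
  intro k
  induction k with
  | zero =>
    intro Z X h hk a ha
    have hXZ : X = Z := by
      have : X \ Z = ∅ := Finset.card_eq_zero.mp hk
      have hsub : X ⊆ Z := by
        intro x hx
        by_contra hxZ
        have : x ∈ X \ Z := Finset.mem_sdiff.mpr ⟨hx, hxZ⟩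
        simp [Finset.card_eq_zero.mp hk] at this
      exact Finset.Subset.antisymm hsub h
    subst hXZ
    have hres : ∀ f : ↥X → Sig, aaRes h f = f := fun f => rfl
    simp only [hres, Nat.sub_self, pow_zero]
    rw [Finset.filter_eq', if_pos ha, Finset.card_singleton]
  | succ k ih =>
    intro Z X h hk a ha
    have hne : (X \ Z).Nonempty := Finset.card_pos.mp (by omega)
    obtain ⟨i, hi⟩ := hne
    have hiX : i ∈ X := (Finset.mem_sdiff.mp hi).1
    have hiZ : i ∉ Z := (Finset.mem_sdiff.mp hi).2
    set W := insert i Z with hWdef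
    have hZW : Z ⊆ W := Finset.subset_insert i Z
    have hWX : W ⊆ X := Finset.insert_subset hiX h
    have hkW : (X \ W).card = k := by
      rw [hWdef, Finset.sdiff_insert, Finset.card_erase_of_mem hi, hk]
      omega
    set T := (codeProj C X).filter (fun f => aaRes h f = a) with hT
    set fibW := (codeProj C W).filter (fun g => aaRes hZW g = a) with hfibW
    have hres_comp : ∀ f : ↥X → Sig, aaRes hZW (aaRes hWX f) = aaRes h f := fun f => rfl
    have hmapsto : ∀ f ∈ T, aaRes hWX f ∈ fibW := by
      intro f hf
      obtain ⟨hfX, hfa⟩ := Finset.mem_filter.mp hf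
      exact Finset.mem_filter.mpr ⟨aaRes_mem C hWX hfX, (hres_comp f).trans hfa⟩
    have hTcard : T.card = ∑ b ∈ fibW, (T.filter (fun f => aaRes hWX f = b)).card :=
      Finset.card_eq_sum_card_fiberwise hmapsto
    have hinner : ∀ b ∈ fibW,
        (T.filter (fun f => aaRes hWX f = b)).card = s ^ (ρC X - ρC W) := by
      intro b hb
      obtain ⟨hbW, hba⟩ := Finset.mem_filter.mp hb
      have heq : T.filter (fun f => aaRes hWX f = b)
          = (codeProj C X).filter (fun f => aaRes hWX f = b) := by
        rw [hT, Finset.filter_filter]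
        apply Finset.filter_congr
        intro f hf
        constructor
        · rintro ⟨_, h2⟩; exact h2
        · intro h2
          refine ⟨?_, h2⟩
          rw [← hres_comp f, h2, hba]
      rw [heq]
      exact ih W X hWX hkW b hbW
    have hfibWcard : fibW.card = s ^ (ρC W - ρC Z) := aa_step hs hs2 haff hiZ ha
    rw [hTcard, Finset.sum_congr rfl hinner, Finset.sum_const, smul_eq_mul,
      hfibWcard, ← pow_add]
    congr 1
    have h1 : ρC Z ≤ ρC W := aa_mono hs2 haff hZW
    have h2 : ρC W ≤ ρC X := aa_mono hs2 haff hWX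
    omega

end AAaux

/-- Every almost affine code `C ⊆ Σ^n` with `s = |Σ|` induces a
matroid on `[n]` with rank function `ρ_C(X) = log_s |C_X|`; that is, `ρ_C`
satisfies `0 ≤ ρ_C(X) ≤ |X|`, monotonicity and semimodularity.
(Almost affinity is encoded by the existence of the integer-valued `ρC` with
`s ^ ρC X = |C_X|` for all `X`.) -/
theorem almostAffine_induces_matroid {Sig : Type*} [Fintype Sig] [DecidableEq Sig]
    (n s : ℕ) (hs : Fintype.card Sig = s) (hs2 : 2 ≤ s)
    (C : Finset (Fin n → Sig))
    (ρC : Finset (Fin n) → ℕ)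
    (haff : ∀ X : Finset (Fin n), s ^ ρC X = (codeProj C X).card) :
    (∀ X : Finset (Fin n), ρC X ≤ X.card) ∧
    (∀ X Y : Finset (Fin n), X ⊆ Y → ρC X ≤ ρC Y) ∧
    (∀ X Y : Finset (Fin n), ρC (X ∪ Y) + ρC (X ∩ Y) ≤ ρC X + ρC Y) := by
  refine ⟨?_, fun X Y h => aa_mono hs2 haff h, ?_⟩
  · -- rank bound
    intro X
    have h1 : (codeProj C X).card ≤ s ^ X.card := by
      calc (codeProj C X).card ≤ Fintype.card (↥X → Sig) := Finset.card_le_univ _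
        _ = (Fintype.card Sig) ^ (Fintype.card ↥X) := Fintype.card_fun
        _ = s ^ X.card := by rw [hs, Fintype.card_coe]
    rw [← haff] at h1
    exact (Nat.pow_le_pow_iff_right (by omega)).mp h1
  · -- submodularity
    intro X Y
    have hZY : X ∩ Y ⊆ Y := Finset.inter_subset_right
    have hZX : X ∩ Y ⊆ X := Finset.inter_subset_left
    have hYU : Y ⊆ X ∪ Y := Finset.subset_union_right
    have hXU : X ⊆ X ∪ Y := Finset.subset_union_left
    obtain ⟨b, hb⟩ := aa_nonempty hs2 haff (C := C) (ρC := ρC) Y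
    set a : ↥(X ∩ Y) → Sig := aaRes hZY b with hadef
    have ha : a ∈ codeProj C (X ∩ Y) := aaRes_mem C hZY hb
    set F := ((codeProj C (X ∪ Y)).filter (fun f => aaRes hYU f = b)) with hF
    set G := ((codeProj C X).filter (fun f => aaRes hZX f = a)) with hG
    have hFcard : F.card = s ^ (ρC (X ∪ Y) - ρC Y) :=
      aa_fiber hs hs2 haff ((X ∪ Y) \ Y).card Y (X ∪ Y) hYU rfl b hb
    have hGcard : G.card = s ^ (ρC X - ρC (X ∩ Y)) :=
      aa_fiber hs hs2 haff (X \ (X ∩ Y)).card (X ∩ Y) X hZX rfl a ha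
    -- injection from F to G by restriction to X
    have hFG : F.card ≤ G.card := by
      apply Finset.card_le_card_of_injOn (aaRes hXU)
      · intro f hf
        obtain ⟨hfU, hfb⟩ := Finset.mem_filter.mp hf
        refine Finset.mem_filter.mpr ⟨aaRes_mem C hXU hfU, ?_⟩
        have : aaRes hZX (aaRes hXU f) = aaRes hZY (aaRes hYU f) := rfl
        rw [this, hfb, hadef]
      · intro f hf g hg hval
        have hfb : aaRes hYU f = b := (Finset.mem_filter.mp hf).2
        have hgb : aaRes hYU g = b := (Finset.mem_filter.mp hg).2
        funext j
        obtain ⟨j, hj⟩ := j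
        rcases Finset.mem_union.mp hj with hjX | hjY
        · exact congrFun hval ⟨j, hjX⟩
        · exact (congrFun hfb ⟨j, hjY⟩).trans (congrFun hgb ⟨j, hjY⟩).symm
    rw [hFcard, hGcard] at hFG
    have h1 : ρC (X ∪ Y) - ρC Y ≤ ρC X - ρC (X ∩ Y) :=
      (Nat.pow_le_pow_iff_right (by omega)).mp hFG
    have h2 : ρC Y ≤ ρC (X ∪ Y) := aa_mono hs2 haff hYU
    have h3 : ρC (X ∩ Y) ≤ ρC X := aa_mono hs2 haff hZX
    omega
end

section
/- If M = (E, ρ) is a matroid with E a cyclic flat (1_Z = E), and X ⊆ E satisfies ρ(X) < ρ(E), then η(X) ≤ max{η(Z) : Z a coatom of the lattice of cyclic flats of M}. -/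
/-- A set is cyclic if removing any single element does not change its rank
(equivalently, it is a union of circuits). -/
def IsCyclicSet {α : Type*} [DecidableEq α] (ρ : Finset α → ℕ) (X : Finset α) : Prop :=
  ∀ x ∈ X, ρ (X.erase x) = ρ X

/-- A flat of the matroid `(E, ρ)`: a subset equal to its closure. -/
def IsFlat {α : Type*} [DecidableEq α] (E : Finset α) (ρ : Finset α → ℕ)
    (X : Finset α) : Prop :=
  X ⊆ E ∧ ∀ x ∈ E, ρ (insert x X) = ρ X → x ∈ X

/-- A cyclic flat: a flat that is also a cyclic set. -/
def IsCyclicFlat {α : Type*} [DecidableEq α] (E : Finset α) (ρ : Finset α → ℕ)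
    (X : Finset α) : Prop :=
  IsFlat E ρ X ∧ IsCyclicSet ρ X

/-- A coatom of the lattice of cyclic flats (whose greatest element is `E`):
a maximal cyclic flat properly contained in `E`. -/
def IsCoatomCF {α : Type*} [DecidableEq α] (E : Finset α) (ρ : Finset α → ℕ)
    (Z : Finset α) : Prop :=
  IsCyclicFlat E ρ Z ∧ Z ≠ E ∧ ∀ W, IsCyclicFlat E ρ W → Z ⊂ W → W = E

section Aux
variable {α : Type*} [DecidableEq α] {E : Finset α} {ρ : Finset α → ℕ}

lemma union_rank_le
    (hcard : ∀ X, X ⊆ E → ρ X ≤ X.card)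
    (hsubmod : ∀ X Y, X ⊆ E → Y ⊆ E → ρ (X ∪ Y) + ρ (X ∩ Y) ≤ ρ X + ρ Y)
    {A B : Finset α} (hA : A ⊆ E) (hB : B ⊆ E) :
    ρ (A ∪ B) ≤ ρ A + B.card := by
  have h1 := hsubmod A B hA hB
  have h2 := hcard B hB
  omega

lemma closure_step
    (hmono : ∀ X Y, X ⊆ Y → Y ⊆ E → ρ X ≤ ρ Y)
    (hsubmod : ∀ X Y, X ⊆ E → Y ⊆ E → ρ (X ∪ Y) + ρ (X ∩ Y) ≤ ρ X + ρ Y)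
    {A B : Finset α} {x : α} (hx : x ∈ E) (hAB : A ⊆ B) (hB : B ⊆ E)
    (h : ρ (insert x A) = ρ A) : ρ (insert x B) = ρ B := by
  by_cases hxB : x ∈ B
  · rw [Finset.insert_eq_self.2 hxB]
  · have hA : A ⊆ E := hAB.trans hB
    have h1 : insert x A ∪ B = insert x B := by
      rw [Finset.insert_union, Finset.union_eq_right.2 hAB]
    have h2 : insert x A ∩ B = A := by
      ext y
      simp only [Finset.mem_inter, Finset.mem_insert]
      constructor
      · rintro ⟨h | h, hyB⟩
        · exact absurd (h ▸ hyB) hxB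
        · exact h
      · intro hy; exact ⟨Or.inr hy, hAB hy⟩
    have hs := hsubmod (insert x A) B (Finset.insert_subset hx hA) hB
    rw [h1, h2, h] at hs
    have hm := hmono B (insert x B) (Finset.subset_insert _ _) (Finset.insert_subset hx hB)
    omega

lemma rank_union_eq
    (hmono : ∀ X Y, X ⊆ Y → Y ⊆ E → ρ X ≤ ρ Y)
    (hsubmod : ∀ X Y, X ⊆ E → Y ⊆ E → ρ (X ∪ Y) + ρ (X ∩ Y) ≤ ρ X + ρ Y)
    {X : Finset α} (hX : X ⊆ E) (S : Finset α) :
    S ⊆ E → (∀ y ∈ S, ρ (insert y X) = ρ X) → ρ (X ∪ S) = ρ X := by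
  induction S using Finset.induction_on with
  | empty => simp
  | @insert a S ha ih =>
    intro hSE hall
    have hSE' : S ⊆ E := (Finset.subset_insert a S).trans hSE
    have haE : a ∈ E := hSE (Finset.mem_insert_self a S)
    have ihS : ρ (X ∪ S) = ρ X := ih hSE' (fun y hy => hall y (Finset.mem_insert_of_mem hy))
    have h1 : X ∪ insert a S = insert a (X ∪ S) := by
      ext y; simp only [Finset.mem_union, Finset.mem_insert]; tauto
    have h2 : ρ (insert a X) = ρ X := hall a (Finset.mem_insert_self a S)
    have h3 := closure_step hmono hsubmod haE Finset.subset_union_left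
      (Finset.union_subset hX hSE') h2
    rw [h1, h3, ihS]

lemma coloop_removal
    (hmono : ∀ X Y, X ⊆ Y → Y ⊆ E → ρ X ≤ ρ Y)
    (hsubmod : ∀ X Y, X ⊆ E → Y ⊆ E → ρ (X ∪ Y) + ρ (X ∩ Y) ≤ ρ X + ρ Y)
    {Y : Finset α} (hY : Y ⊆ E) (D' : Finset α) :
    D' ⊆ Y.filter (fun x => ρ (Y.erase x) ≠ ρ Y) →
      ρ (Y \ D') + D'.card ≤ ρ Y := by
  induction D' using Finset.induction_on with
  | empty => simp
  | @insert a D ha ih =>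
    intro hsub
    have haf := hsub (Finset.mem_insert_self a D)
    have haY : a ∈ Y := (Finset.mem_filter.1 haf).1
    have hane : ρ (Y.erase a) ≠ ρ Y := (Finset.mem_filter.1 haf).2
    have hD : D ⊆ Y.filter (fun x => ρ (Y.erase x) ≠ ρ Y) :=
      (Finset.subset_insert a D).trans hsub
    have ihD := ih hD
    have haYD : a ∈ Y \ D := Finset.mem_sdiff.2 ⟨haY, ha⟩
    have hkey : ρ ((Y \ D).erase a) ≠ ρ (Y \ D) := by
      intro h
      apply hane
      have hAB : (Y \ D).erase a ⊆ Y.erase a :=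
        Finset.erase_subset_erase a (Finset.sdiff_subset)
      have := closure_step hmono hsubmod (hY haY) hAB
        ((Finset.erase_subset a Y).trans hY)
        (by rw [Finset.insert_erase haYD]; exact h.symm ▸ rfl)
      rw [Finset.insert_erase haY] at this
      exact this.symm
    have hle : ρ ((Y \ D).erase a) ≤ ρ (Y \ D) :=
      hmono _ _ (Finset.erase_subset a _) (Finset.sdiff_subset.trans hY)
    have heq : Y \ insert a D = (Y \ D).erase a := by
      ext y
      simp only [Finset.mem_sdiff, Finset.mem_insert, Finset.mem_erase]
      tauto
    rw [heq, Finset.card_insert_of_notMem ha]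
    omega

end Aux

/-- If `M = (E, ρ)` is a matroid with `E` a cyclic flat
(`1_Z = E`), and `X ⊆ E` satisfies `ρ(X) < ρ(E)`, then
`η(X) ≤ max{η(Z) : Z a coatom of the lattice of cyclic flats}`
(here stated as: some coatom `Z` has `η(X) ≤ η(Z)`, with `η(Y) = |Y| − ρ(Y)`). -/
theorem nullity_le_max_coatom_nullity {α : Type*} [DecidableEq α] (E : Finset α)
    (ρ : Finset α → ℕ)
    (hcard : ∀ X, X ⊆ E → ρ X ≤ X.card)
    (hmono : ∀ X Y, X ⊆ Y → Y ⊆ E → ρ X ≤ ρ Y)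
    (hsubmod : ∀ X Y, X ⊆ E → Y ⊆ E → ρ (X ∪ Y) + ρ (X ∩ Y) ≤ ρ X + ρ Y)
    (hE : IsCyclicFlat E ρ E)
    (X : Finset α) (hX : X ⊆ E) (hlt : ρ X < ρ E) :
    ∃ Z, IsCoatomCF E ρ Z ∧ X.card - ρ X ≤ Z.card - ρ Z := by
  classical
  -- the closure of X
  set F := E.filter (fun y => ρ (insert y X) = ρ X) with hFdef
  have hFE : F ⊆ E := Finset.filter_subset _ _
  have hXF : X ⊆ F := fun y hy =>
    Finset.mem_filter.2 ⟨hX hy, by rw [Finset.insert_eq_self.2 hy]⟩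
  have hρF : ρ F = ρ X := by
    have hu : X ∪ F = F := Finset.union_eq_right.2 hXF
    rw [← hu]
    exact rank_union_eq hmono hsubmod hX F hFE (fun y hy => (Finset.mem_filter.1 hy).2)
  have hFflat : IsFlat E ρ F := by
    refine ⟨hFE, fun y hyE hy => ?_⟩
    refine Finset.mem_filter.2 ⟨hyE, le_antisymm ?_ ?_⟩
    · calc ρ (insert y X) ≤ ρ (insert y F) :=
            hmono _ _ (Finset.insert_subset_insert y hXF) (Finset.insert_subset hyE hFE)
        _ = ρ F := hy
        _ = ρ X := hρF
    · exact hmono X (insert y X) (Finset.subset_insert y X)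
        (Finset.insert_subset hyE hX)
  -- remove the coloops of F
  set D := F.filter (fun x => ρ (F.erase x) ≠ ρ F) with hDdef
  have hDF : D ⊆ F := Finset.filter_subset _ _
  set Z0 := F \ D with hZ0def
  have hZ0F : Z0 ⊆ F := Finset.sdiff_subset
  have hZ0E : Z0 ⊆ E := hZ0F.trans hFE
  have hDE : D ⊆ E := hDF.trans hFE
  have hle1 : ρ Z0 + D.card ≤ ρ F :=
    coloop_removal hmono hsubmod hFE D Finset.Subset.rfl
  have hge1 : ρ F ≤ ρ Z0 + D.card := by
    have hu : Z0 ∪ D = F := Finset.sdiff_union_of_subset hDF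
    have := union_rank_le hcard hsubmod hZ0E hDE
    rw [hu] at this; exact this
  have heq1 : ρ Z0 + D.card = ρ F := le_antisymm hle1 hge1
  have hZ0cyc : IsCyclicSet ρ Z0 := by
    intro x hx
    have hxF : x ∈ F := hZ0F hx
    have hxD : x ∉ D := (Finset.mem_sdiff.1 hx).2
    have hxE : ρ (F.erase x) = ρ F := by
      by_contra hne
      exact hxD (Finset.mem_filter.2 ⟨hxF, hne⟩)
    refine le_antisymm (hmono _ _ (Finset.erase_subset x Z0) hZ0E) ?_
    have hsub : F.erase x ⊆ (Z0.erase x) ∪ D := by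
      intro y hy
      obtain ⟨hyx, hyF⟩ := Finset.mem_erase.1 hy
      by_cases hyD : y ∈ D
      · exact Finset.mem_union_right _ hyD
      · exact Finset.mem_union_left _
          (Finset.mem_erase.2 ⟨hyx, Finset.mem_sdiff.2 ⟨hyF, hyD⟩⟩)
    have h1 : ρ (F.erase x) ≤ ρ ((Z0.erase x) ∪ D) :=
      hmono _ _ hsub (Finset.union_subset ((Finset.erase_subset x Z0).trans hZ0E) hDE)
    have h2 : ρ ((Z0.erase x) ∪ D) ≤ ρ (Z0.erase x) + D.card :=
      union_rank_le hcard hsubmod ((Finset.erase_subset x Z0).trans hZ0E) hDE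
    omega
  have hZ0flat : IsFlat E ρ Z0 := by
    refine ⟨hZ0E, fun y hyE hy => ?_⟩
    have hyF : y ∈ F := by
      apply hFflat.2 y hyE
      exact closure_step hmono hsubmod hyE hZ0F hFE hy
    have hyD : y ∉ D := by
      intro hyD
      have hcond : ρ (F.erase y) ≠ ρ F := (Finset.mem_filter.1 hyD).2
      have hyZ0 : y ∉ Z0 := fun h => (Finset.mem_sdiff.1 h).2 hyD
      have hsub : Z0 ⊆ F.erase y :=
        fun z hz => Finset.mem_erase.2 ⟨fun h => hyZ0 (h ▸ hz), hZ0F hz⟩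
      have := closure_step hmono hsubmod hyE hsub
        ((Finset.erase_subset y F).trans hFE) hy
      rw [Finset.insert_erase hyF] at this
      exact hcond this.symm
    exact Finset.mem_sdiff.2 ⟨hyF, hyD⟩
  have hρZ0X : ρ Z0 ≤ ρ X := by omega
  have hZ0ne : Z0 ≠ E := by
    intro h
    rw [h] at hρZ0X
    omega
  have hηX : X.card - ρ X ≤ Z0.card - ρ Z0 := by
    have h1 : Z0.card = F.card - D.card := Finset.card_sdiff_of_subset hDF
    have h2 : D.card ≤ F.card := Finset.card_le_card hDF
    have h3 : X.card ≤ F.card := Finset.card_le_card hXF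
    have h4 : ρ X ≤ X.card := hcard X hX
    have h5 : ρ Z0 ≤ Z0.card := hcard Z0 hZ0E
    omega
  -- select a maximal candidate
  set S := E.powerset.filter
    (fun W => IsCyclicFlat E ρ W ∧ W ≠ E ∧ X.card - ρ X ≤ W.card - ρ W) with hSdef
  have hZ0S : Z0 ∈ S :=
    Finset.mem_filter.2 ⟨Finset.mem_powerset.2 hZ0E, ⟨hZ0flat, hZ0cyc⟩, hZ0ne, hηX⟩
  obtain ⟨Z, hZS, hmax⟩ := S.exists_max_image Finset.card ⟨Z0, hZ0S⟩
  obtain ⟨hZpow, hZcf, hZne, hZη⟩ := Finset.mem_filter.1 hZS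
  have hZE : Z ⊆ E := Finset.mem_powerset.1 hZpow
  refine ⟨Z, ⟨hZcf, hZne, fun W hWcf hZW => ?_⟩, hZη⟩
  by_contra hWE
  have hWsubE : W ⊆ E := hWcf.1.1
  obtain ⟨x, hxW, hxZ⟩ := Finset.exists_of_ssubset hZW
  have hx1 : ρ (W.erase x) = ρ W := hWcf.2 x hxW
  have hZsub : Z ⊆ W.erase x :=
    fun z hz => Finset.mem_erase.2 ⟨fun h => hxZ (h ▸ hz), hZW.subset hz⟩
  have hu : Z ∪ (W.erase x \ Z) = W.erase x := Finset.union_sdiff_of_subset hZsub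
  have h2 : ρ (W.erase x) ≤ ρ Z + (W.erase x \ Z).card := by
    have := union_rank_le (B := W.erase x \ Z) hcard hsubmod hZE
      ((Finset.sdiff_subset).trans ((Finset.erase_subset x W).trans hWsubE))
    rw [hu] at this; exact this
  have hc1 : (W.erase x).card = W.card - 1 := Finset.card_erase_of_mem hxW
  have hc2 : (W.erase x \ Z).card = (W.erase x).card - Z.card := Finset.card_sdiff_of_subset hZsub
  have hc3 : Z.card ≤ (W.erase x).card := Finset.card_le_card hZsub
  have hc4 : 1 ≤ W.card := Finset.card_pos.2 ⟨x, hxW⟩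
  have h5 : ρ Z ≤ Z.card := hcard Z hZE
  have h6 : ρ W ≤ W.card := hcard W hWsubE
  have hWη : X.card - ρ X ≤ W.card - ρ W := by omega
  have hWS : W ∈ S :=
    Finset.mem_filter.2 ⟨Finset.mem_powerset.2 hWsubE, hWcf, hWE, hWη⟩
  have hmaxW := hmax W hWS
  have hcardlt := Finset.card_lt_card hZW
  omega
end

section
/- Let M = (E, ρ) be a matroid with 0 < ρ(E) and with E a cyclic flat. Then the minimum size of a circuit of the dual matroid M* equals n − k + 1 − max{η(Z) : Z a coatom of the lattice of cyclic flats}, where n = |E| and k = ρ(E). -/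
set_option linter.unusedSectionVars false
namespace MDC
variable {α : Type*} [DecidableEq α] {E : Finset α} {ρ : Finset α → ℕ}

theorem rank_empty (hcard : ∀ X, X ⊆ E → ρ X ≤ X.card) : ρ (∅ : Finset α) = 0 :=
  Nat.le_zero.mp (by simpa using hcard ∅ (by simp))

theorem rank_insert_le (hcard : ∀ X, X ⊆ E → ρ X ≤ X.card)
    (hsubmod : ∀ X Y, X ⊆ E → Y ⊆ E → ρ (X ∪ Y) + ρ (X ∩ Y) ≤ ρ X + ρ Y)
    {X : Finset α} {x : α} (hX : X ⊆ E) (hx : x ∈ E) :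
    ρ (insert x X) ≤ ρ X + 1 := by
  have h := hsubmod X {x} hX (by simpa using hx)
  have h1 : ρ {x} ≤ 1 := by simpa using hcard {x} (by simpa using hx)
  have hu : X ∪ {x} = insert x X := by ext y; simp [Finset.mem_union]
  rw [hu] at h
  omega

theorem rank_union_le (hcard : ∀ X, X ⊆ E → ρ X ≤ X.card)
    (hsubmod : ∀ X Y, X ⊆ E → Y ⊆ E → ρ (X ∪ Y) + ρ (X ∩ Y) ≤ ρ X + ρ Y)
    {X : Finset α} (hX : X ⊆ E) :
    ∀ S : Finset α, S ⊆ E → ρ (X ∪ S) ≤ ρ X + S.card := by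
  intro S
  induction S using Finset.induction_on with
  | empty => intro _; simp
  | @insert a s ha ih =>
    intro hS
    have hs : s ⊆ E := (Finset.subset_insert a s).trans hS
    have ha' : a ∈ E := hS (Finset.mem_insert_self a s)
    have h1 := rank_insert_le hcard hsubmod (Finset.union_subset hX hs) ha'
    have h2 : X ∪ insert a s = insert a (X ∪ s) := Finset.union_insert a X s
    rw [h2, Finset.card_insert_of_notMem ha]
    have := ih hs
    omega

theorem rank_union_eq (hmono : ∀ X Y, X ⊆ Y → Y ⊆ E → ρ X ≤ ρ Y)
    (hsubmod : ∀ X Y, X ⊆ E → Y ⊆ E → ρ (X ∪ Y) + ρ (X ∩ Y) ≤ ρ X + ρ Y)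
    {X : Finset α} (hX : X ⊆ E) :
    ∀ Y : Finset α, Y ⊆ E → (∀ y ∈ Y, ρ (insert y X) = ρ X) → ρ (X ∪ Y) = ρ X := by
  intro Y
  induction Y using Finset.induction_on with
  | empty => intro _ _; simp
  | @insert a s ha ih =>
    intro hY hspan
    have hs : s ⊆ E := (Finset.subset_insert a s).trans hY
    have ha' : a ∈ E := hY (Finset.mem_insert_self a s)
    have ihs : ρ (X ∪ s) = ρ X :=
      ih hs (fun y hy => hspan y (Finset.mem_insert_of_mem hy))
    have hXs : X ∪ s ⊆ E := Finset.union_subset hX hs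
    have hiX : insert a X ⊆ E := Finset.insert_subset ha' hX
    have hsub := hsubmod (X ∪ s) (insert a X) hXs hiX
    have hun : (X ∪ s) ∪ insert a X = insert a (X ∪ s) := by
      ext y
      simp only [Finset.mem_union, Finset.mem_insert]
      tauto
    have hint : X ⊆ (X ∪ s) ∩ insert a X := by
      intro y hy
      simp only [Finset.mem_inter, Finset.mem_union, Finset.mem_insert]
      tauto
    have hintE : (X ∪ s) ∩ insert a X ⊆ E :=
      (Finset.inter_subset_left).trans hXs
    have h1 : ρ X ≤ ρ ((X ∪ s) ∩ insert a X) := hmono _ _ hint hintE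
    have h2 : ρ (insert a X) = ρ X := hspan a (Finset.mem_insert_self a s)
    have h3 : X ∪ insert a s = insert a (X ∪ s) := Finset.union_insert a X s
    have h4 : ρ X ≤ ρ (insert a (X ∪ s)) := by
      apply hmono _ _ _ (Finset.insert_subset ha' hXs)
      exact (Finset.subset_union_left).trans (Finset.subset_insert _ _)
    rw [h3]
    rw [hun] at hsub
    omega

theorem exists_augment (hcard : ∀ X, X ⊆ E → ρ X ≤ X.card)
    (hmono : ∀ X Y, X ⊆ Y → Y ⊆ E → ρ X ≤ ρ Y)
    (hsubmod : ∀ X Y, X ⊆ E → Y ⊆ E → ρ (X ∪ Y) + ρ (X ∩ Y) ≤ ρ X + ρ Y)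
    {X : Finset α} (hX : X ⊆ E) (h : ρ X < ρ E) :
    ∃ y ∈ E, ρ (insert y X) = ρ X + 1 := by
  by_contra hcon
  push_neg at hcon
  have hall : ∀ y ∈ E, ρ (insert y X) = ρ X := by
    intro y hy
    have h1 := rank_insert_le hcard hsubmod hX hy
    have h2 : ρ X ≤ ρ (insert y X) :=
      hmono _ _ (Finset.subset_insert _ _) (Finset.insert_subset hy hX)
    have := hcon y hy
    omega
  have := rank_union_eq hmono hsubmod hX E (Finset.Subset.refl E) hall
  rw [Finset.union_eq_right.mpr hX] at this
  omega

/-- The closure of a set. -/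
def cl (E : Finset α) (ρ : Finset α → ℕ) (X : Finset α) : Finset α :=
  X ∪ E.filter (fun x => ρ (insert x X) = ρ X)

theorem subset_cl (X : Finset α) : X ⊆ cl E ρ X := Finset.subset_union_left

theorem cl_subset {X : Finset α} (hX : X ⊆ E) : cl E ρ X ⊆ E :=
  Finset.union_subset hX (Finset.filter_subset _ _)

theorem rank_cl (hmono : ∀ X Y, X ⊆ Y → Y ⊆ E → ρ X ≤ ρ Y)
    (hsubmod : ∀ X Y, X ⊆ E → Y ⊆ E → ρ (X ∪ Y) + ρ (X ∩ Y) ≤ ρ X + ρ Y)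
    {X : Finset α} (hX : X ⊆ E) : ρ (cl E ρ X) = ρ X := by
  apply rank_union_eq hmono hsubmod hX _ (Finset.filter_subset _ _)
  intro y hy
  exact (Finset.mem_filter.mp hy).2

theorem cl_isFlat (hmono : ∀ X Y, X ⊆ Y → Y ⊆ E → ρ X ≤ ρ Y)
    (hsubmod : ∀ X Y, X ⊆ E → Y ⊆ E → ρ (X ∪ Y) + ρ (X ∩ Y) ≤ ρ X + ρ Y)
    {X : Finset α} (hX : X ⊆ E) : IsFlat E ρ (cl E ρ X) := by
  refine ⟨cl_subset hX, ?_⟩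
  intro x hx hrk
  have hclE : cl E ρ X ⊆ E := cl_subset hX
  have h1 : ρ (insert x X) ≤ ρ (insert x (cl E ρ X)) :=
    hmono _ _ (Finset.insert_subset_insert x (subset_cl X)) (Finset.insert_subset hx hclE)
  have h2 : ρ X ≤ ρ (insert x X) :=
    hmono _ _ (Finset.subset_insert _ _) (Finset.insert_subset hx hX)
  have h3 : ρ (cl E ρ X) = ρ X := rank_cl hmono hsubmod hX
  have : ρ (insert x X) = ρ X := by omega
  exact Finset.mem_union_right _ (Finset.mem_filter.mpr ⟨hx, this⟩)

theorem flat_rank_lt (hmono : ∀ X Y, X ⊆ Y → Y ⊆ E → ρ X ≤ ρ Y)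
    {Z : Finset α} (hZ : IsFlat E ρ Z) (hne : Z ≠ E) : ρ Z < ρ E := by
  have hle : ρ Z ≤ ρ E := hmono _ _ hZ.1 (Finset.Subset.refl E)
  rcases lt_or_eq_of_le hle with h | h
  · exact h
  · exfalso
    apply hne
    apply Finset.Subset.antisymm hZ.1
    intro x hx
    apply hZ.2 x hx
    have h1 : ρ (insert x Z) ≤ ρ E :=
      hmono _ _ (Finset.insert_subset hx hZ.1) (Finset.Subset.refl E)
    have h2 : ρ Z ≤ ρ (insert x Z) :=
      hmono _ _ (Finset.subset_insert _ _) (Finset.insert_subset hx hZ.1)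
    omega

theorem rank_sdiff_coloops (hcard : ∀ X, X ⊆ E → ρ X ≤ X.card)
    (hmono : ∀ X Y, X ⊆ Y → Y ⊆ E → ρ X ≤ ρ Y)
    (hsubmod : ∀ X Y, X ⊆ E → Y ⊆ E → ρ (X ∪ Y) + ρ (X ∩ Y) ≤ ρ X + ρ Y)
    {H : Finset α} (hH : H ⊆ E) :
    ∀ S : Finset α, S ⊆ H → (∀ x ∈ S, ρ (H.erase x) ≠ ρ H) →
      ρ (H \ S) + S.card = ρ H := by
  intro S
  induction S using Finset.induction_on with
  | empty => intro _ _; simp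
  | @insert a s ha ih =>
    intro hS hcol
    have hs : s ⊆ H := (Finset.subset_insert a s).trans hS
    have haH : a ∈ H := hS (Finset.mem_insert_self a s)
    have haE : a ∈ E := hH haH
    -- a is a coloop of H
    have hea : ρ (H.erase a) + 1 = ρ H := by
      have h1 : ρ (H.erase a) ≤ ρ H :=
        hmono _ _ (Finset.erase_subset a H) hH
      have h2 : ρ H ≤ ρ (H.erase a) + 1 := by
        have := rank_insert_le hcard hsubmod ((Finset.erase_subset a H).trans hH) haE
        rwa [Finset.insert_erase haH] at this
      have h3 := hcol a (Finset.mem_insert_self a s)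
      omega
    have hHsE : H \ s ⊆ E := (Finset.sdiff_subset).trans hH
    have heaE : H.erase a ⊆ E := (Finset.erase_subset a H).trans hH
    have hsub := hsubmod (H.erase a) (H \ s) heaE hHsE
    have hun : H.erase a ∪ (H \ s) = H := by
      ext y
      simp only [Finset.mem_union, Finset.mem_erase, Finset.mem_sdiff]
      constructor
      · tauto
      · intro hy
        by_cases hya : y = a
        · subst hya; exact Or.inr ⟨hy, ha⟩
        · exact Or.inl ⟨hya, hy⟩
    have hint : H.erase a ∩ (H \ s) = (H \ s).erase a := by
      ext y
      simp only [Finset.mem_inter, Finset.mem_erase, Finset.mem_sdiff]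
      tauto
    rw [hun, hint] at hsub
    have haHs : a ∈ H \ s := Finset.mem_sdiff.mpr ⟨haH, ha⟩
    have h4 : ρ (H \ s) ≤ ρ ((H \ s).erase a) + 1 := by
      have := rank_insert_le hcard hsubmod
        ((Finset.erase_subset a (H \ s)).trans hHsE) haE
      rwa [Finset.insert_erase haHs] at this
    have ihs : ρ (H \ s) + s.card = ρ H :=
      ih hs (fun x hx => hcol x (Finset.mem_insert_of_mem hx))
    have hsd : H \ insert a s = (H \ s).erase a := by
      ext y
      simp only [Finset.mem_sdiff, Finset.mem_erase, Finset.mem_insert]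
      tauto
    rw [hsd, Finset.card_insert_of_notMem ha]
    omega

theorem cyclic_core (hcard : ∀ X, X ⊆ E → ρ X ≤ X.card)
    (hmono : ∀ X Y, X ⊆ Y → Y ⊆ E → ρ X ≤ ρ Y)
    (hsubmod : ∀ X Y, X ⊆ E → Y ⊆ E → ρ (X ∪ Y) + ρ (X ∩ Y) ≤ ρ X + ρ Y)
    {H : Finset α} (hH : IsFlat E ρ H) (hlt : ρ H < ρ E) :
    ∃ Z, IsCyclicFlat E ρ Z ∧ Z ≠ E ∧ ρ H + Z.card = ρ Z + H.card := by
  have hHE : H ⊆ E := hH.1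
  set Z : Finset α := H.filter (fun x => ρ (H.erase x) = ρ H) with hZdef
  set S : Finset α := H \ Z with hSdef
  have hZH : Z ⊆ H := Finset.filter_subset _ _
  have hZE : Z ⊆ E := hZH.trans hHE
  have hScol : ∀ x ∈ S, ρ (H.erase x) ≠ ρ H := by
    intro x hx
    rw [hSdef, Finset.mem_sdiff, hZdef, Finset.mem_filter] at hx
    tauto
  have hSH : S ⊆ H := Finset.sdiff_subset
  have hHS : H \ S = Z := by
    rw [hSdef, Finset.sdiff_sdiff_self_left, Finset.inter_eq_right.mpr hZH]
  have hrk : ρ Z + S.card = ρ H := by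
    have := rank_sdiff_coloops hcard hmono hsubmod hHE S hSH hScol
    rwa [hHS] at this
  have hcards : Z.card + S.card = H.card := by
    have h1 : S.card = H.card - Z.card := by rw [hSdef, Finset.card_sdiff_of_subset hZH]
    have h2 : Z.card ≤ H.card := Finset.card_le_card hZH
    omega
  have hflat : IsFlat E ρ Z := by
    refine ⟨hZE, ?_⟩
    intro x hxE hins
    -- first show x ∈ H
    have hZS : Z ∪ S = H := by
      rw [hSdef]; exact Finset.union_sdiff_of_subset hZH
    have hxH : x ∈ H := by
      have hun : insert x Z ∪ S = insert x H := by
        rw [Finset.insert_union, hZS]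
      have h1 : ρ (insert x H) ≤ ρ (insert x Z) + S.card := by
        have := rank_union_le hcard hsubmod
          (Finset.insert_subset hxE hZE) S (hSH.trans hHE)
        rwa [hun] at this
      have h2 : ρ H ≤ ρ (insert x H) :=
        hmono _ _ (Finset.subset_insert _ _) (Finset.insert_subset hxE hHE)
      apply hH.2 x hxE
      omega
    by_contra hxZ
    have hxS : x ∈ S := Finset.mem_sdiff.mpr ⟨hxH, hxZ⟩
    have hS' : ρ (H \ S.erase x) + (S.erase x).card = ρ H := by
      apply rank_sdiff_coloops hcard hmono hsubmod hHE
      · exact (Finset.erase_subset x S).trans hSH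
      · intro y hy
        exact hScol y (Finset.mem_of_mem_erase hy)
    have hins' : H \ S.erase x = insert x Z := by
      ext y
      simp only [Finset.mem_sdiff, Finset.mem_erase, Finset.mem_insert]
      constructor
      · intro ⟨hyH, hy2⟩
        by_cases hyx : y = x
        · exact Or.inl hyx
        · right
          by_contra hyZ
          exact hy2 ⟨hyx, Finset.mem_sdiff.mpr ⟨hyH, hyZ⟩⟩
      · intro hy
        rcases hy with hyx | hyZ
        · subst hyx
          exact ⟨hxH, fun h => absurd rfl h.1⟩
        · refine ⟨hZH hyZ, fun h => ?_⟩
          exact (Finset.mem_sdiff.mp h.2).2 hyZ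
    rw [hins'] at hS'
    have hcS : (S.erase x).card + 1 = S.card := Finset.card_erase_add_one hxS
    omega
  have hcyc : IsCyclicSet ρ Z := by
    intro x hxZ
    have hx2 : ρ (H.erase x) = ρ H := (Finset.mem_filter.mp hxZ).2
    have hxS : x ∉ S := fun h => (Finset.mem_sdiff.mp h).2 hxZ
    have hun : Z.erase x ∪ S = H.erase x := by
      ext y
      simp only [Finset.mem_union, Finset.mem_erase, Finset.mem_sdiff]
      constructor
      · rintro (⟨hyx, hyZ⟩ | hyS)
        · exact ⟨hyx, hZH hyZ⟩
        · obtain ⟨hyH, hyZ⟩ := Finset.mem_sdiff.mp hyS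
          refine ⟨fun h => ?_, hyH⟩
          subst h; exact hyZ hxZ
      · rintro ⟨hyx, hyH⟩
        by_cases hyZ : y ∈ Z
        · exact Or.inl ⟨hyx, hyZ⟩
        · exact Or.inr (Finset.mem_sdiff.mpr ⟨hyH, hyZ⟩)
    have h1 : ρ (H.erase x) ≤ ρ (Z.erase x) + S.card := by
      have := rank_union_le hcard hsubmod
        ((Finset.erase_subset x Z).trans hZE) S (hSH.trans hHE)
      rwa [hun] at this
    have h2 : ρ (Z.erase x) ≤ ρ Z :=
      hmono _ _ (Finset.erase_subset x Z) hZE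
    omega
  refine ⟨Z, ⟨hflat, hcyc⟩, ?_, by omega⟩
  intro hZeq
  have : ρ Z ≤ ρ H := hmono _ _ hZH hHE
  rw [hZeq] at this
  omega

theorem exists_hyperplane (hcard : ∀ X, X ⊆ E → ρ X ≤ X.card)
    (hmono : ∀ X Y, X ⊆ Y → Y ⊆ E → ρ X ≤ ρ Y)
    (hsubmod : ∀ X Y, X ⊆ E → Y ⊆ E → ρ (X ∪ Y) + ρ (X ∩ Y) ≤ ρ X + ρ Y) :
    ∀ (m : ℕ) (Z : Finset α), IsFlat E ρ Z → ρ Z + m + 1 = ρ E →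
      ∃ H, IsFlat E ρ H ∧ Z ⊆ H ∧ ρ H + 1 = ρ E := by
  intro m
  induction m with
  | zero => exact fun Z hZ h => ⟨Z, hZ, Finset.Subset.refl _, h⟩
  | succ m ih =>
    intro Z hZ h
    obtain ⟨y, hyE, hy⟩ := exists_augment hcard hmono hsubmod hZ.1 (by omega)
    have hiZ : insert y Z ⊆ E := Finset.insert_subset hyE hZ.1
    have hflat := cl_isFlat hmono hsubmod hiZ
    have hrk : ρ (cl E ρ (insert y Z)) = ρ Z + 1 := by
      rw [rank_cl hmono hsubmod hiZ, hy]
    obtain ⟨H, hH, hsub, hr⟩ := ih (cl E ρ (insert y Z)) hflat (by omega)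
    exact ⟨H, hH, ((Finset.subset_insert y Z).trans (subset_cl _)).trans hsub, hr⟩

theorem exists_coatom {W : Finset α} (hW : IsCyclicFlat E ρ W) (hne : W ≠ E) :
    ∃ Z, IsCoatomCF E ρ Z ∧ W ⊆ Z := by
  classical
  set 𝒮 : Finset (Finset α) :=
    E.powerset.filter (fun Z => IsCyclicFlat E ρ Z ∧ Z ≠ E ∧ W ⊆ Z) with h𝒮
  have hmem : ∀ Z, Z ∈ 𝒮 ↔ IsCyclicFlat E ρ Z ∧ Z ≠ E ∧ W ⊆ Z := by
    intro Z
    rw [h𝒮, Finset.mem_filter, Finset.mem_powerset]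
    constructor
    · tauto
    · intro h; exact ⟨h.1.1.1, h⟩
  have hne𝒮 : 𝒮.Nonempty :=
    ⟨W, (hmem W).mpr ⟨hW, hne, Finset.Subset.refl W⟩⟩
  obtain ⟨Z, hZ𝒮, hmax⟩ := 𝒮.exists_maximal hne𝒮
  obtain ⟨hZcf, hZne, hWZ⟩ := (hmem Z).mp hZ𝒮
  refine ⟨Z, ⟨hZcf, hZne, ?_⟩, hWZ⟩
  intro W' hW' hss
  by_contra hW'ne
  have hW'mem : W' ∈ 𝒮 := (hmem W').mpr ⟨hW', hW'ne, hWZ.trans hss.subset⟩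
  exact hss.2 (hmax hW'mem hss.subset)

theorem exists_proper_cyclicflat (hcard : ∀ X, X ⊆ E → ρ X ≤ X.card)
    (hmono : ∀ X Y, X ⊆ Y → Y ⊆ E → ρ X ≤ ρ Y)
    (hsubmod : ∀ X Y, X ⊆ E → Y ⊆ E → ρ (X ∪ Y) + ρ (X ∩ Y) ≤ ρ X + ρ Y)
    (hk0 : 0 < ρ E) : ∃ W, IsCyclicFlat E ρ W ∧ W ≠ E := by
  have hflat := cl_isFlat hmono hsubmod (Finset.empty_subset E)
  have hrk : ρ (cl E ρ ∅) = 0 := by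
    rw [rank_cl hmono hsubmod (Finset.empty_subset E), rank_empty hcard]
  refine ⟨cl E ρ ∅, ⟨hflat, ?_⟩, ?_⟩
  · intro x hx
    have h1 : ρ ((cl E ρ ∅).erase x) ≤ ρ (cl E ρ ∅) :=
      hmono _ _ (Finset.erase_subset _ _) hflat.1
    omega
  · intro h
    rw [h] at hrk
    omega

theorem eta_mono (hcard : ∀ X, X ⊆ E → ρ X ≤ X.card)
    (hsubmod : ∀ X Y, X ⊆ E → Y ⊆ E → ρ (X ∪ Y) + ρ (X ∩ Y) ≤ ρ X + ρ Y)
    {X Y : Finset α} (hXY : X ⊆ Y) (hY : Y ⊆ E) :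
    ρ Y + X.card ≤ ρ X + Y.card := by
  have h1 : ρ (X ∪ (Y \ X)) ≤ ρ X + (Y \ X).card :=
    rank_union_le hcard hsubmod (hXY.trans hY) _ (Finset.sdiff_subset.trans hY)
  rw [Finset.union_sdiff_of_subset hXY, Finset.card_sdiff_of_subset hXY] at h1
  have h2 : X.card ≤ Y.card := Finset.card_le_card hXY
  omega

theorem sdiff_erase_insert {C : Finset α} {x : α} (hx : x ∈ E) :
    E \ C.erase x = insert x (E \ C) := by
  ext y
  simp only [Finset.mem_sdiff, Finset.mem_erase, Finset.mem_insert, not_and]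
  by_cases hyx : y = x
  · subst hyx; simp [hx]
  · simp only [hyx, false_or]
    constructor
    · intro ⟨h1, h2⟩; exact ⟨h1, h2 hyx⟩
    · intro ⟨h1, h2⟩; exact ⟨h1, fun _ => h2⟩

end MDC

open MDC

/-- Let `M = (E, ρ)` be a matroid with `0 < ρ(E)` and `E` a cyclic
flat. Then the minimum size of a circuit of the dual matroid `M*` equals
`n − k + 1 − max{η(Z) : Z a coatom of the lattice of cyclic flats}`,
with `n = |E|`, `k = ρ(E)`, `η(Z) = |Z| − ρ(Z)`. -/
theorem min_dual_circuit_eq {α : Type*} [DecidableEq α] (E : Finset α)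
    (ρ : Finset α → ℕ)
    (hcard : ∀ X, X ⊆ E → ρ X ≤ X.card)
    (hmono : ∀ X Y, X ⊆ Y → Y ⊆ E → ρ X ≤ ρ Y)
    (hsubmod : ∀ X Y, X ⊆ E → Y ⊆ E → ρ (X ∪ Y) + ρ (X ∩ Y) ≤ ρ X + ρ Y)
    (hk0 : 0 < ρ E) (hE : IsCyclicFlat E ρ E)
    (d : ℕ)
    (hd : d = sInf {c : ℕ | ∃ C, C ⊆ E ∧ ρ (E \ C) < ρ E ∧
        (∀ C', C' ⊂ C → ρ (E \ C') = ρ E) ∧ C.card = c})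
    (mx : ℕ)
    (hmx : mx = sSup {v : ℕ | ∃ Z, IsCoatomCF E ρ Z ∧ v = Z.card - ρ Z}) :
    (d : ℤ) = (E.card : ℤ) - (ρ E : ℤ) + 1 - (mx : ℤ) := by
  -- the coatom value set
  set V : Set ℕ := {v : ℕ | ∃ Z, IsCoatomCF E ρ Z ∧ v = Z.card - ρ Z} with hV
  obtain ⟨W0, hW0, hW0ne⟩ := exists_proper_cyclicflat hcard hmono hsubmod hk0
  obtain ⟨Z0, hZ0, _⟩ := exists_coatom hW0 hW0ne
  have hVne : V.Nonempty := ⟨Z0.card - ρ Z0, ⟨Z0, hZ0, rfl⟩⟩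
  have hVbdd : BddAbove V := by
    refine ⟨E.card, ?_⟩
    rintro v ⟨Z, hZ, rfl⟩
    have h1 : Z.card ≤ E.card := Finset.card_le_card hZ.1.1.1
    omega
  have hmxmem : mx ∈ V := hmx ▸ Nat.sSup_mem hVne hVbdd
  obtain ⟨Zc, hZc, hZcval⟩ := hmxmem
  have hZcρ : ρ Zc ≤ Zc.card := hcard Zc hZc.1.1.1
  have hZcval' : mx + ρ Zc = Zc.card := by omega
  -- upper bound on η over proper cyclic flats
  have hub : ∀ W, IsCyclicFlat E ρ W → W ≠ E → W.card ≤ ρ W + mx := by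
    intro W hW hWne
    obtain ⟨Z, hZ, hWZ⟩ := exists_coatom hW hWne
    have h1 : ρ Z + W.card ≤ ρ W + Z.card := eta_mono hcard hsubmod hWZ hZ.1.1.1
    have h2 : Z.card - ρ Z ≤ mx := hmx ▸ le_csSup hVbdd ⟨Z, hZ, rfl⟩
    have h3 : ρ Z ≤ Z.card := hcard Z hZ.1.1.1
    omega
  -- build a hyperplane containing Zc with maximal eta
  have hZclt : ρ Zc < ρ E := flat_rank_lt hmono hZc.1.1 hZc.2.1
  obtain ⟨H, hHflat, hZcH, hHrk⟩ :=
    exists_hyperplane hcard hmono hsubmod (ρ E - ρ Zc - 1) Zc hZc.1.1 (by omega)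
  have hHE : H ⊆ E := hHflat.1
  have hHlt : ρ H < ρ E := by omega
  have hHcard : H.card = ρ H + mx := by
    have h1 : ρ H + Zc.card ≤ ρ Zc + H.card := eta_mono hcard hsubmod hZcH hHE
    obtain ⟨Z', hZ'cf, hZ'ne, hZ'eq⟩ := cyclic_core hcard hmono hsubmod hHflat hHlt
    have h2 := hub Z' hZ'cf hZ'ne
    have h3 : ρ H ≤ H.card := hcard H hHE
    omega
  -- the short cocircuit
  set C : Finset α := E \ H with hC
  have hCE : C ⊆ E := Finset.sdiff_subset
  have hEC : E \ C = H := by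
    rw [hC, Finset.sdiff_sdiff_self_left, Finset.inter_eq_right.mpr hHE]
  have hCcard : C.card + H.card = E.card := by
    have h1 : H.card ≤ E.card := Finset.card_le_card hHE
    rw [hC, Finset.card_sdiff_of_subset hHE]
    omega
  have hrkC : ρ (E \ C) < ρ E := by rw [hEC]; omega
  have hmin : ∀ C', C' ⊂ C → ρ (E \ C') = ρ E := by
    intro C' hC'
    obtain ⟨x, hxC, hxC'⟩ := Finset.exists_of_ssubset hC'
    have hxE : x ∈ E := hCE hxC
    have hxH : x ∉ H := (Finset.mem_sdiff.mp hxC).2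
    have hsub : insert x H ⊆ E \ C' := by
      refine Finset.insert_subset (Finset.mem_sdiff.mpr ⟨hxE, hxC'⟩) ?_
      intro y hy
      refine Finset.mem_sdiff.mpr ⟨hHE hy, fun hyC' => ?_⟩
      have hyC : y ∈ C := hC'.subset hyC'
      exact (Finset.mem_sdiff.mp hyC).2 hy
    have h1 : ρ (insert x H) = ρ E := by
      have ha : ρ (insert x H) ≤ ρ H + 1 := rank_insert_le hcard hsubmod hHE hxE
      have hb : ρ H ≤ ρ (insert x H) :=
        hmono _ _ (Finset.subset_insert _ _) (Finset.insert_subset hxE hHE)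
      have hc : ρ (insert x H) ≠ ρ H := fun h => hxH (hHflat.2 x hxE h)
      omega
    have h2 : ρ (insert x H) ≤ ρ (E \ C') :=
      hmono _ _ hsub Finset.sdiff_subset
    have h3 : ρ (E \ C') ≤ ρ E := hmono _ _ Finset.sdiff_subset (Finset.Subset.refl E)
    omega
  -- membership
  set S : Set ℕ := {c : ℕ | ∃ C, C ⊆ E ∧ ρ (E \ C) < ρ E ∧
      (∀ C', C' ⊂ C → ρ (E \ C') = ρ E) ∧ C.card = c} with hS
  have hc0mem : C.card ∈ S := ⟨C, hCE, hrkC, hmin, rfl⟩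
  -- lower bound
  have hlb : ∀ c ∈ S, C.card ≤ c := by
    rintro c ⟨C1, hC1E, hr1, hmin1, rfl⟩
    have hC1ne : C1.Nonempty := by
      rcases Finset.eq_empty_or_nonempty C1 with h | h
      · rw [h, Finset.sdiff_empty] at hr1; omega
      · exact h
    obtain ⟨x, hx⟩ := hC1ne
    have hxE : x ∈ E := hC1E hx
    have hH1E : E \ C1 ⊆ E := Finset.sdiff_subset
    have hstep : ρ (E \ C1) + 1 = ρ E := by
      have h1 := hmin1 (C1.erase x) (Finset.erase_ssubset hx)
      rw [sdiff_erase_insert hxE] at h1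
      have h2 : ρ (insert x (E \ C1)) ≤ ρ (E \ C1) + 1 :=
        rank_insert_le hcard hsubmod hH1E hxE
      omega
    have hflat1 : IsFlat E ρ (E \ C1) := by
      refine ⟨hH1E, ?_⟩
      intro y hyE hins
      by_contra hyH1
      have hyC1 : y ∈ C1 := by
        by_contra hyC1
        exact hyH1 (Finset.mem_sdiff.mpr ⟨hyE, hyC1⟩)
      have h1 := hmin1 (C1.erase y) (Finset.erase_ssubset hyC1)
      rw [sdiff_erase_insert hyE, hins] at h1
      omega
    obtain ⟨Z1, hZ1cf, hZ1ne, hZ1eq⟩ :=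
      cyclic_core hcard hmono hsubmod hflat1 (by omega)
    have h2 := hub Z1 hZ1cf hZ1ne
    have h3 : ρ (E \ C1) ≤ (E \ C1).card := hcard _ hH1E
    have h4 : (E \ C1).card ≤ ρ (E \ C1) + mx := by omega
    have h5 : C1.card + (E \ C1).card = E.card := by
      have := Finset.card_le_card hC1E
      rw [Finset.card_sdiff_of_subset hC1E]
      omega
    omega
  have hd' : d = C.card := by
    rw [hd]
    exact le_antisymm (Nat.sInf_le hc0mem) (hlb _ (Nat.sInf_mem ⟨C.card, hc0mem⟩))
  omega
end

section
/- Let m ≥ 1, and let nonnegative integers η₁,…,η_m have sum s, distributed as evenly as possible: η_i = ⌈s/m⌉ for i ≤ s − ⌊s/m⌋m and η_i = ⌊s/m⌋ otherwise. Then for any t with 1 ≤ t ≤ m, the maximum of Σ_{i∈I} η_i over I ⊆ [m] with |I| = t equals t·⌊s/m⌋ + min{t, s − ⌊s/m⌋·m}, and this is the minimum possible value of this maximum over all nonnegative integer sequences summing to s. -/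
lemma aux_card_filter_lt (m k : ℕ) :
    (Finset.univ.filter (fun i : Fin m => (i : ℕ) < k)).card = min k m := by
  rcases le_or_gt m k with h | h
  · have : (Finset.univ.filter (fun i : Fin m => (i : ℕ) < k)) = Finset.univ := by
      apply Finset.filter_true_of_mem
      intro i _
      exact lt_of_lt_of_le i.isLt h
    simp [this, Nat.min_eq_right h]
  · have : (Finset.univ.filter (fun i : Fin m => (i : ℕ) < k)) = Finset.Iio ⟨k, h⟩ := by
      ext i
      simp [Fin.lt_def]
    rw [this, Fin.card_Iio]
    exact (Nat.min_eq_left h.le).symm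

lemma aux_sum_eta (m s : ℕ) (η : Fin m → ℕ)
    (hη : ∀ i : Fin m, η i = if (i : ℕ) < s % m then s / m + 1 else s / m)
    (I : Finset (Fin m)) :
    ∑ i ∈ I, η i = I.card * (s / m) + (I.filter (fun i : Fin m => (i : ℕ) < s % m)).card := by
  have : ∀ i ∈ I, η i = (s / m) + (if (i : ℕ) < s % m then 1 else 0) := by
    intro i _
    rw [hη i]; split <;> omega
  rw [Finset.sum_congr rfl this, Finset.sum_add_distrib, Finset.sum_const, smul_eq_mul,
    ← Finset.card_filter]

/-- Let `m ≥ 1` and let nonnegative integers `η₁,…,η_m` sum to `s`,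
distributed as evenly as possible (the first `s % m` parts equal `⌈s/m⌉ = s/m + 1`
and the rest equal `⌊s/m⌋ = s/m`). Then for any `t` with `1 ≤ t ≤ m`, the maximum
of `Σ_{i∈I} η_i` over `I ⊆ [m]` with `|I| = t` equals
`t·⌊s/m⌋ + min{t, s − ⌊s/m⌋·m}`, and this is the minimum possible value of this
maximum over all nonnegative integer sequences summing to `s`. -/
theorem even_distribution_minimizes_max (m s t : ℕ)
    (hm : 1 ≤ m) (ht1 : 1 ≤ t) (htm : t ≤ m)
    (η : Fin m → ℕ)
    (hη : ∀ i : Fin m, η i = if (i : ℕ) < s % m then s / m + 1 else s / m) :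
    IsGreatest {v : ℕ | ∃ I : Finset (Fin m), I.card = t ∧ ∑ i ∈ I, η i = v}
      (t * (s / m) + min t (s % m)) ∧
    ∀ η' : Fin m → ℕ, ∑ i, η' i = s →
      ∃ I : Finset (Fin m), I.card = t ∧
        t * (s / m) + min t (s % m) ≤ ∑ i ∈ I, η' i := by
  have hrm : s % m < m := Nat.mod_lt s hm
  constructor
  · constructor
    · -- membership: take I = first t indices
      refine ⟨Finset.univ.filter (fun i : Fin m => (i : ℕ) < t), ?_, ?_⟩
      · rw [aux_card_filter_lt]; omega
      · rw [aux_sum_eta m s η hη, Finset.filter_filter]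
        have hc1 : (Finset.univ.filter (fun i : Fin m => (i : ℕ) < t)).card = t := by
          rw [aux_card_filter_lt]; omega
        have hc2 : (Finset.univ.filter
            (fun i : Fin m => (i : ℕ) < t ∧ (i : ℕ) < s % m)).card = min t (s % m) := by
          have : (Finset.univ.filter (fun i : Fin m => (i : ℕ) < t ∧ (i : ℕ) < s % m))
              = (Finset.univ.filter (fun i : Fin m => (i : ℕ) < min t (s % m))) := by
            ext i; simp [lt_min_iff]
          rw [this, aux_card_filter_lt]; omega
        rw [hc1, hc2]
    · -- upper bound
      rintro v ⟨I, hIcard, hIsum⟩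
      rw [aux_sum_eta m s η hη] at hIsum
      have h1 : (I.filter (fun i : Fin m => (i : ℕ) < s % m)).card ≤ t := by
        rw [← hIcard]; exact Finset.card_filter_le _ _
      have h2 : (I.filter (fun i : Fin m => (i : ℕ) < s % m)).card ≤ s % m := by
        calc (I.filter (fun i : Fin m => (i : ℕ) < s % m)).card
            ≤ (Finset.univ.filter (fun i : Fin m => (i : ℕ) < s % m)).card :=
              Finset.card_le_card (Finset.filter_subset_filter _ (Finset.subset_univ I))
          _ = min (s % m) m := aux_card_filter_lt m (s % m)
          _ ≤ s % m := Nat.min_le_left _ _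
      rw [hIcard] at hIsum
      omega
  · -- minimality
    intro η' hsum
    have hdm : m * (s / m) + s % m = s := Nat.div_add_mod s m
    set A := Finset.univ.filter (fun i : Fin m => s / m + 1 ≤ η' i) with hA
    rcases le_or_gt t A.card with hcase | hcase
    · obtain ⟨I, hIA, hIcard⟩ := Finset.exists_subset_card_eq hcase
      refine ⟨I, hIcard, ?_⟩
      have hle : ∑ _i ∈ I, (s / m + 1) ≤ ∑ i ∈ I, η' i := by
        apply Finset.sum_le_sum
        intro i hi
        have := hIA hi
        rw [hA, Finset.mem_filter] at this
        exact this.2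
      rw [Finset.sum_const, smul_eq_mul, hIcard, Nat.mul_add, Nat.mul_one] at hle
      have : min t (s % m) ≤ t := Nat.min_le_left _ _
      omega
    · obtain ⟨I, hAI, _, hIcard⟩ := Finset.exists_subsuperset_card_eq
        (Finset.subset_univ A) hcase.le (by simpa using htm)
      refine ⟨I, hIcard, ?_⟩
      have hcompl : ∑ i ∈ Iᶜ, η' i ≤ (m - t) * (s / m) := by
        calc ∑ i ∈ Iᶜ, η' i ≤ ∑ _i ∈ Iᶜ, (s / m) := by
              apply Finset.sum_le_sum
              intro i hi
              by_contra hcon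
              have : i ∈ A := by
                rw [hA, Finset.mem_filter]
                exact ⟨Finset.mem_univ i, by omega⟩
              exact (Finset.mem_compl.mp hi) (hAI this)
          _ = (m - t) * (s / m) := by
              rw [Finset.sum_const, smul_eq_mul, Finset.card_compl, hIcard]
              simp
      have htot : ∑ i ∈ I, η' i + ∑ i ∈ Iᶜ, η' i = s := by
        rw [Finset.sum_add_sum_compl, hsum]
      have hmul : (m - t) * (s / m) + t * (s / m) = m * (s / m) := by
        rw [← Nat.add_mul]; congr 1; omega
      have hmin : min t (s % m) ≤ s % m := Nat.min_le_right _ _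
      omega
end

section
/- The function s ↦ t·⌊s/m⌋ + min{t, s − ⌊s/m⌋·m} is nondecreasing in s (for fixed positive integers t ≤ m), and the function m ↦ t·⌊(n−rm)/m⌋ + min{t, (n−rm) − ⌊(n−rm)/m⌋·m} is nonincreasing in m (for fixed t, r, n with n − rm ≥ 0). -/
private lemma aux_mod_eq (s m : ℕ) : s - s / m * m = s % m := by
  have := Nat.div_add_mod s m
  rw [Nat.mul_comm] at this
  omega

private lemma aux_step (t m n : ℕ) (hm : 1 ≤ m) :
    t * (n / m) + min t (n % m) ≤ t * ((n + 1) / m) + min t ((n + 1) % m) := by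
  rcases lt_or_ge (n % m + 1) m with h | h
  · have hdiv : (n + 1) / m = n / m := by
      conv_lhs => rw [← Nat.div_add_mod n m]
      rw [show m * (n / m) + n % m + 1 = (n % m + 1) + m * (n / m) by ring,
        Nat.add_mul_div_left _ _ hm, Nat.div_eq_of_lt h, Nat.zero_add]
    have hmod : (n + 1) % m = n % m + 1 := by
      conv_lhs => rw [← Nat.div_add_mod n m]
      rw [show m * (n / m) + n % m + 1 = (n % m + 1) + m * (n / m) by ring,
        Nat.add_mul_mod_self_left, Nat.mod_eq_of_lt h]
    rw [hdiv, hmod]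
    omega
  · have hr : n % m + 1 = m := by have := Nat.mod_lt n hm; omega
    have hdiv : (n + 1) / m = n / m + 1 := by
      conv_lhs => rw [← Nat.div_add_mod n m]
      rw [show m * (n / m) + n % m + 1 = m * (n / m + 1) by rw [Nat.mul_succ]; omega,
        Nat.mul_div_cancel_left _ hm]
    have hmod : (n + 1) % m = 0 := by
      conv_lhs => rw [← Nat.div_add_mod n m]
      rw [show m * (n / m) + n % m + 1 = m * (n / m + 1) by rw [Nat.mul_succ]; omega,
        Nat.mul_mod_right]
    rw [hdiv, hmod, Nat.mul_succ]
    have h1 : min t (n % m) ≤ t := min_le_left _ _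
    omega

private lemma aux_mono (t m : ℕ) (hm : 1 ≤ m) :
    ∀ s s' : ℕ, s ≤ s' →
      t * (s / m) + min t (s % m) ≤ t * (s' / m) + min t (s' % m) := by
  intro s s' hss
  induction s', hss using Nat.le_induction with
  | base => exact le_refl _
  | succ n hn ih => exact ih.trans (aux_step t m n hm)

private lemma aux_val (t m q r : ℕ) (hm : 1 ≤ m) (hr : r < m) :
    t * ((q * m + r) / m) + min t ((q * m + r) % m) = t * q + min t r := by
  rw [show q * m + r = r + q * m by ring, Nat.add_mul_div_right _ _ hm,
    Nat.add_mul_mod_self_right, Nat.div_eq_of_lt hr, Nat.mod_eq_of_lt hr, Nat.zero_add]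

private lemma aux_anti (t s m₁ m₂ : ℕ) (hm₁ : 1 ≤ m₁) (h12 : m₁ ≤ m₂) (ht : t ≤ m₁) :
    t * (s / m₂) + min t (s % m₂) ≤ t * (s / m₁) + min t (s % m₁) := by
  set q := s / m₂ with hq
  set r := s % m₂ with hrr
  have hs : m₂ * q + r = s := Nat.div_add_mod s m₂
  rcases lt_or_ge r m₁ with h | h
  · have h1 : q * m₁ + r ≤ s := by nlinarith
    calc t * q + min t r = t * ((q * m₁ + r) / m₁) + min t ((q * m₁ + r) % m₁) :=
          (aux_val t m₁ q r hm₁ h).symm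
      _ ≤ _ := aux_mono t m₁ hm₁ _ _ h1
  · have h1 : (q + 1) * m₁ + 0 ≤ s := by nlinarith
    have h2 : t * q + min t r ≤ t * (((q + 1) * m₁ + 0) / m₁) + min t (((q + 1) * m₁ + 0) % m₁) := by
      rw [aux_val t m₁ (q + 1) 0 hm₁ hm₁, Nat.mul_succ]
      have : min t r ≤ t := min_le_left _ _
      omega
    exact h2.trans (aux_mono t m₁ hm₁ _ _ h1)

/-- The function `s ↦ t·⌊s/m⌋ + min{t, s − ⌊s/m⌋·m}` is
nondecreasing in `s` (for fixed positive integers `t ≤ m`), and the function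
`m ↦ t·⌊(n−rm)/m⌋ + min{t, (n−rm) − ⌊(n−rm)/m⌋·m}` is nonincreasing in `m`
(for fixed `t, r, n` with `n − rm ≥ 0`). -/
theorem coatom_nullity_bound_monotone (t m : ℕ) (ht : 1 ≤ t) (hm : 1 ≤ m)
    (htm : t ≤ m) :
    (∀ s s' : ℕ, s ≤ s' →
      t * (s / m) + min t (s - (s / m) * m) ≤
        t * (s' / m) + min t (s' - (s' / m) * m)) ∧
    (∀ n r m₁ m₂ : ℕ, 1 ≤ m₁ → m₁ ≤ m₂ → t ≤ m₁ → r * m₂ ≤ n →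
      t * ((n - r * m₂) / m₂) + min t ((n - r * m₂) - ((n - r * m₂) / m₂) * m₂) ≤
        t * ((n - r * m₁) / m₁) + min t ((n - r * m₁) - ((n - r * m₁) / m₁) * m₁)) := by
  simp only [aux_mod_eq]
  constructor
  · exact fun s s' h => aux_mono t m hm s s' h
  · intro n r m₁ m₂ hm₁ h12 ht₁ hrn
    have hle : n - r * m₂ ≤ n - r * m₁ := by
      have : r * m₁ ≤ r * m₂ := Nat.mul_le_mul_left r h12
      omega
    calc t * ((n - r * m₂) / m₂) + min t ((n - r * m₂) % m₂)
        ≤ t * ((n - r * m₂) / m₁) + min t ((n - r * m₂) % m₁) :=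
          aux_anti t _ m₁ m₂ hm₁ h12 ht₁
      _ ≤ _ := aux_mono t m₁ hm₁ _ _ hle
end

section
/- With notation as in the improved lower bound, d_new − d_old ≥ ⌊(r+δ−1−b)/m⌋ · (m − ⌈k/r⌉ + 1) ≥ 0, where d_old = n−k+1−⌈k/r⌉(δ−1)+(b−r) and d_new = n−k+1−(⌈k/r⌉−1)(⌊(r+δ−1−b)/m⌋+δ−1) − min{v, ⌈k/r⌉−1}. -/
/-- With notation of the improved lower bound,
`d_new − d_old ≥ ⌊(r+δ−1−b)/m⌋ · (m − ⌈k/r⌉ + 1) ≥ 0`, where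
`d_old = n−k+1−⌈k/r⌉(δ−1)+(b−r)` and
`d_new = n−k+1−(⌈k/r⌉−1)(⌊(r+δ−1−b)/m⌋+δ−1) − min{v, ⌈k/r⌉−1}`. -/
theorem improvement_over_old_bound (n k r δ ceilK ceilN a b m q v : ℕ)
    (hr0 : 0 < r) (hrk : r < k) (hδ : 2 ≤ δ)
    (hceilK : ceilK = (k + r - 1) / r)
    (hceilN : ceilN = (n + (r + δ - 1) - 1) / (r + δ - 1))
    (hkn : k + ceilK * (δ - 1) ≤ n)
    (ha : a = ceilK * r - k)
    (hb : b = ceilN * (r + δ - 1) - n)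
    (hab : a < b)
    (hm : m = ceilN - 1)
    (hq : q = (r + δ - 1 - b) / m)
    (hv : v = (r + δ - 1 - b) - q * m)
    (dold dnew : ℤ)
    (hdold : dold = (n : ℤ) - (k : ℤ) + 1 - (ceilK : ℤ) * ((δ : ℤ) - 1) +
      ((b : ℤ) - (r : ℤ)))
    (hdnew : dnew = (n : ℤ) - (k : ℤ) + 1 -
      ((ceilK : ℤ) - 1) * ((q : ℤ) + (δ : ℤ) - 1) - (min v (ceilK - 1) : ℕ)) :
    (q : ℤ) * ((m : ℤ) - (ceilK : ℤ) + 1) ≤ dnew - dold ∧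
    0 ≤ (q : ℤ) * ((m : ℤ) - (ceilK : ℤ) + 1) := by
  have hs : 0 < r + δ - 1 := by omega
  -- k ≤ ceilK * r
  have h1 : k ≤ ceilK * r := by
    have h := Nat.lt_div_mul_add (a := k + r - 1) hr0
    rw [hceilK]
    set t := (k + r - 1) / r * r with ht
    omega
  -- n ≤ ceilN * (r+δ-1) ≤ n + (r+δ-1) - 1
  have h2 : n ≤ ceilN * (r + δ - 1) := by
    have h := Nat.lt_div_mul_add (a := n + (r + δ - 1) - 1) hs
    rw [hceilN]
    set t := (n + (r + δ - 1) - 1) / (r + δ - 1) * (r + δ - 1) with ht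
    omega
  have h3 : ceilN * (r + δ - 1) ≤ n + (r + δ - 1) - 1 := by
    have h := Nat.div_mul_le_self (n + (r + δ - 1) - 1) (r + δ - 1)
    rw [hceilN]; omega
  -- ceilK < ceilN
  have hKN : ceilK < ceilN := by
    have hd : ceilK * (r + δ - 1) = ceilK * r + ceilK * (δ - 1) := by
      have : r + δ - 1 = r + (δ - 1) := by omega
      rw [this, Nat.mul_add]
    have hlt : ceilK * (r + δ - 1) < ceilN * (r + δ - 1) := by
      rw [hd]; omega
    exact Nat.lt_of_mul_lt_mul_right hlt
  have hmK : ceilK ≤ m := by omega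
  -- b ≤ r + δ - 2, and q*m + v = r + δ - 1 - b
  have hbs : b + 1 ≤ r + δ - 1 := by omega
  have hqm : q * m ≤ r + δ - 1 - b := by rw [hq]; exact Nat.div_mul_le_self _ _
  have hX : q * m + v + b + 1 = r + δ := by omega
  have hXZ : (q : ℤ) * m + v = (r : ℤ) + δ - 1 - b := by
    have := hX
    zify at this
    linarith
  have hmin : ((min v (ceilK - 1) : ℕ) : ℤ) ≤ (v : ℤ) := by
    exact_mod_cast Nat.min_le_left v (ceilK - 1)
  have hK1 : 1 ≤ ceilK := by
    rcases Nat.eq_zero_or_pos ceilK with h | h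
    · rw [h] at h1; omega
    · exact h
  have heq : dnew - dold = (q : ℤ) * ((m : ℤ) - (ceilK : ℤ) + 1) +
      ((v : ℤ) - ((min v (ceilK - 1) : ℕ) : ℤ)) := by
    subst hdold hdnew
    linear_combination -hXZ
  have hmZ : (ceilK : ℤ) ≤ (m : ℤ) := by exact_mod_cast hmK
  constructor
  · rw [heq]; linarith
  · apply mul_nonneg (by positivity); linarith
end
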